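/- Let A ∈ ℝ^{n×n}, B ∈ ℝ^{n×m}, X ⊆ ℝⁿ, U ⊆ ℝᵐ, and let T ⊆ X be control invariant. If there exists a feasible N-step plan from x₀, then there exist infinite sequences (x_k)_{k≥0} and (u_k)_{k≥0} with x_{k+1} = A x_k + B u_k, such that for every k ≥ 0 there is a feasible N-step plan from x_k whose first input is u_k; in particular x_k ∈ X and u_k ∈ U for all k ≥ 0. -/
import Mathlib


/-- A feasible `N`-step plan for the system `x⁺ = A x + B u` from initial point `x₀`,
with state constraint set `X`, input constraint set `U`, and terminal set `T`. -/
def FeasiblePlan {n m : ℕ} (A : Matrix (Fin n) (Fin n) ℝ) (B : Matrix (Fin n) (Fin m) ℝ)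
    (X : Set (Fin n → ℝ)) (U : Set (Fin m → ℝ)) (T : Set (Fin n → ℝ)) (N : ℕ)
    (x₀ : Fin n → ℝ) (x : ℕ → Fin n → ℝ) (u : ℕ → Fin m → ℝ) : Prop :=
  x 0 = x₀ ∧
  (∀ p < N, x (p + 1) = A.mulVec (x p) + B.mulVec (u p)) ∧
  (∀ p < N, x p ∈ X) ∧
  (∀ p < N, u p ∈ U) ∧
  x N ∈ T

lemma mpc_step {n m N : ℕ}
    (A : Matrix (Fin n) (Fin n) ℝ) (B : Matrix (Fin n) (Fin m) ℝ)
    (X : Set (Fin n → ℝ)) (U : Set (Fin m → ℝ)) (T : Set (Fin n → ℝ))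
    (hTX : T ⊆ X)
    (hInv : ∀ x ∈ T, ∃ u ∈ U, A.mulVec x + B.mulVec u ∈ T)
    (x₀ : Fin n → ℝ)
    (hfeas : ∃ x u, FeasiblePlan A B X U T N x₀ x u) :
    ∃ u₀, u₀ ∈ U ∧ x₀ ∈ X ∧
      (∃ x u, FeasiblePlan A B X U T N x₀ x u ∧ u 0 = u₀) ∧
      (∃ x u, FeasiblePlan A B X U T N (A.mulVec x₀ + B.mulVec u₀) x u) := by
  obtain ⟨x, u, hx0, hdyn, hX, hU, hT⟩ := hfeas
  obtain ⟨w, hwU, hwT⟩ := hInv (x N) hT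
  -- modified input: use w at step N (and beyond)
  set v : ℕ → Fin m → ℝ := fun p => if p < N then u p else w with hv
  have hplan : FeasiblePlan A B X U T N x₀ x v := by
    refine ⟨hx0, ?_, hX, ?_, hT⟩
    · intro p hp; simpa [hv, hp] using hdyn p hp
    · intro p hp; simpa [hv, hp] using hU p hp
  have hv0U : v 0 ∈ U := by
    by_cases h0 : 0 < N
    · simpa [hv, h0] using hU 0 h0
    · simp [hv, h0, hwU]
  have hx0X : x₀ ∈ X := by
    by_cases h0 : 0 < N
    · rw [← hx0]; exact hX 0 h0
    · have : N = 0 := by omega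
      rw [← hx0]; exact hTX (this ▸ hT)
  refine ⟨v 0, hv0U, hx0X, ⟨x, v, hplan, rfl⟩, ?_⟩
  -- extended trajectory
  set y : ℕ → Fin n → ℝ := fun p => if p ≤ N then x p else A.mulVec (x N) + B.mulVec w with hy
  have hnext : A.mulVec x₀ + B.mulVec (v 0) = y 1 := by
    by_cases h0 : 0 < N
    · have h1 : 1 ≤ N := h0
      simp only [hy, if_pos h1, hv, if_pos h0]
      rw [← hx0]
      exact (hdyn 0 h0).symm
    · have hN : N = 0 := by omega
      simp [hy, hN, hv, hx0]
  refine ⟨fun p => y (p + 1), fun p => v (p + 1), ?_, ?_, ?_, ?_, ?_⟩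
  · exact hnext.symm
  · intro p hp
    by_cases h : p + 1 < N
    · have h2 : p + 2 ≤ N := h
      have h1 : p + 1 ≤ N := le_of_lt h
      simp only [hy, if_pos h2, if_pos h1, hv, if_pos h]
      exact hdyn (p + 1) h
    · have hpN : p + 1 = N := by omega
      have h1 : p + 1 ≤ N := le_of_eq hpN
      have h2 : ¬ (p + 2 ≤ N) := by omega
      have h3 : ¬ (p + 1 < N) := by omega
      simp only [hy, if_neg h2, if_pos h1, hv, if_neg h3, hpN,
        if_neg (show ¬ N + 1 ≤ N by omega), if_pos (le_refl N), if_neg (lt_irrefl N)]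
  · intro p hp
    have h1 : p + 1 ≤ N := hp
    simp only [hy, if_pos h1]
    by_cases h : p + 1 < N
    · exact hX (p + 1) h
    · have : p + 1 = N := by omega
      rw [this]; exact hTX hT
  · intro p hp
    by_cases h : p + 1 < N
    · simpa [hv, h] using hU (p + 1) h
    · simpa [hv, h] using hwU
  · have h2 : ¬ (N + 1 ≤ N) := by omega
    simp only [hy, if_neg h2]
    exact hwT

/-- Lemma 1 (recursive feasibility): if `T ⊆ X` is control invariant and there exists a
feasible `N`-step plan from `x₀`, then there are infinite closed-loop sequences
`(xs k)`, `(us k)` with `xs (k+1) = A xs k + B us k`, such that at every time `k` there is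
a feasible `N`-step plan from `xs k` whose first input is `us k`; in particular
`xs k ∈ X` and `us k ∈ U` for all `k`. -/
theorem mpc_recursively_feasible {n m N : ℕ}
    (A : Matrix (Fin n) (Fin n) ℝ) (B : Matrix (Fin n) (Fin m) ℝ)
    (X : Set (Fin n → ℝ)) (U : Set (Fin m → ℝ)) (T : Set (Fin n → ℝ))
    (hTX : T ⊆ X)
    (hInv : ∀ x ∈ T, ∃ u ∈ U, A.mulVec x + B.mulVec u ∈ T)
    (x₀ : Fin n → ℝ)
    (hfeas : ∃ x u, FeasiblePlan A B X U T N x₀ x u) :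
    ∃ (xs : ℕ → Fin n → ℝ) (us : ℕ → Fin m → ℝ),
      xs 0 = x₀ ∧
      (∀ k, xs (k + 1) = A.mulVec (xs k) + B.mulVec (us k)) ∧
      (∀ k, ∃ x u, FeasiblePlan A B X U T N (xs k) x u ∧ u 0 = us k) ∧
      (∀ k, xs k ∈ X) ∧
      (∀ k, us k ∈ U) := by
  have key := fun z (hz : ∃ x u, FeasiblePlan A B X U T N z x u) =>
    mpc_step A B X U T hTX hInv z hz
  choose! f hfU hfX hfplan hfnext using key
  set xs : ℕ → Fin n → ℝ :=
    fun k => Nat.rec x₀ (fun _ p => A.mulVec p + B.mulVec (f p)) k with hxs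
  have hgood : ∀ k, ∃ x u, FeasiblePlan A B X U T N (xs k) x u := by
    intro k
    induction k with
    | zero => exact hfeas
    | succ k ih => exact hfnext (xs k) ih
  refine ⟨xs, fun k => f (xs k), rfl, fun k => rfl, ?_, ?_, ?_⟩
  · intro k; exact hfplan (xs k) (hgood k)
  · intro k; exact hfX (xs k) (hgood k)
  · intro k; exact hfU (xs k) (hgood k)
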